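/- Let (λ_n)_{n≥1} be a sequence of nonnegative real numbers, let 0 < γ_min < γ*_min, and let N* ≥ 1 be an integer, with √λ_{n+1} − √λ_n ≥ γ_min for all n ≥ 1 and √λ_{n+1} − √λ_n ≥ γ*_min for all n ≥ N*. Set M* := (1 − γ_min/γ*_min)(N* − 1). Then for every ρ > 0: if ρ ≤ λ_{N*} then N_{N*}(ρ) ≤ √ρ/γ_min + √ρ/γ*_min, and if ρ ≥ λ_{N*} then N_{N*}(ρ) ≤ M* + 2√ρ/γ*_min. -/

import Mathlib

/-- The counting function `N_n(ρ) = card { k ≥ 1 : 0 < |λ_n - λ_k| ≤ ρ }`. -/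
noncomputable def countingFn (lam : ℕ → ℝ) (n : ℕ) (ρ : ℝ) : ℕ :=
  Set.ncard {k : ℕ | 1 ≤ k ∧ 0 < |lam n - lam k| ∧ |lam n - lam k| ≤ ρ}

theorem counting_bound_at_Nstar_Mstar (lam : ℕ → ℝ) (γmin γmin' : ℝ) (Ns : ℕ)
    (hγ : 0 < γmin) (hγγ : γmin < γmin') (hNs : 1 ≤ Ns)
    (hpos : ∀ n, 1 ≤ n → 0 ≤ lam n)
    (hgap : ∀ n, 1 ≤ n → γmin ≤ Real.sqrt (lam (n + 1)) - Real.sqrt (lam n))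
    (hgap' : ∀ n, Ns ≤ n → γmin' ≤ Real.sqrt (lam (n + 1)) - Real.sqrt (lam n)) :
    ∀ ρ : ℝ, 0 < ρ →
      (ρ ≤ lam Ns →
        (countingFn lam Ns ρ : ℝ) ≤ Real.sqrt ρ / γmin + Real.sqrt ρ / γmin') ∧
      (lam Ns ≤ ρ →
        (countingFn lam Ns ρ : ℝ) ≤
          (1 - γmin / γmin') * ((Ns : ℝ) - 1) + 2 * Real.sqrt ρ / γmin') := by
  intro ρ hρ
  have hγ' : 0 < γmin' := hγ.trans hγγ
  set μ : ℕ → ℝ := fun k => Real.sqrt (lam k) with hμdef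
  have hμ0 : ∀ k, 0 ≤ μ k := fun k => Real.sqrt_nonneg _
  have hlamsq : ∀ k, 1 ≤ k → lam k = μ k ^ 2 := fun k hk => (Real.sq_sqrt (hpos k hk)).symm
  have mono : ∀ j, 1 ≤ j → ∀ m : ℕ, μ j + γmin * m ≤ μ (j + m) := by
    intro j hj m
    induction m with
    | zero => simp
    | succ m ih =>
      have h := hgap (j + m) (le_trans hj (Nat.le_add_right _ _))
      have hμ1 : μ (j + m) + γmin ≤ μ (j + m + 1) := by
        simp only [hμdef]; linarith
      have heq : (j + (m + 1)) = (j + m) + 1 := by omega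
      rw [heq]
      push_cast
      push_cast at ih
      linarith
  have mono' : ∀ m : ℕ, μ Ns + γmin' * m ≤ μ (Ns + m) := by
    intro m
    induction m with
    | zero => simp
    | succ m ih =>
      have h := hgap' (Ns + m) (Nat.le_add_right _ _)
      have hμ1 : μ (Ns + m) + γmin' ≤ μ (Ns + m + 1) := by
        simp only [hμdef]; linarith
      have heq : (Ns + (m + 1)) = (Ns + m) + 1 := by omega
      rw [heq]
      push_cast
      push_cast at ih
      linarith
  set d : ℕ := Nat.floor (Real.sqrt ρ / γmin) with hddef
  set d' : ℕ := Nat.floor (Real.sqrt ρ / γmin') with hd'def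
  set F : Finset ℕ := (Finset.Ico (max 1 (Ns - d)) Ns) ∪ (Finset.Ioc Ns (Ns + d')) with hFdef
  have hsub : {k : ℕ | 1 ≤ k ∧ 0 < |lam Ns - lam k| ∧ |lam Ns - lam k| ≤ ρ} ⊆ (F : Set ℕ) := by
    intro k hk
    obtain ⟨hk1, hkpos, hkρ⟩ := hk
    have hkne : k ≠ Ns := by
      rintro rfl
      simp at hkpos
    simp only [hFdef, Finset.coe_union, Set.mem_union, Finset.mem_coe, Finset.mem_Ico,
      Finset.mem_Ioc]
    rcases lt_or_gt_of_ne hkne with hlt | hgt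
    · left
      have hmono := mono k hk1 (Ns - k)
      rw [Nat.add_sub_cancel' hlt.le] at hmono
      have hc0 : (0:ℝ) ≤ γmin * ((Ns - k : ℕ) : ℝ) :=
        mul_nonneg hγ.le (Nat.cast_nonneg _)
      have hμle : μ k ≤ μ Ns := by nlinarith
      have habs : lam Ns - lam k ≤ ρ := by
        have hlamle : lam k ≤ lam Ns := by
          rw [hlamsq k hk1, hlamsq Ns hNs]
          nlinarith [hμ0 k, hμ0 Ns]
        rwa [abs_of_nonneg (by linarith)] at hkρ
      have hsq : (γmin * ((Ns - k : ℕ) : ℝ)) ^ 2 ≤ ρ := by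
        rw [hlamsq k hk1, hlamsq Ns hNs] at habs
        nlinarith [hμ0 k, hμ0 Ns]
      have hle : γmin * ((Ns - k : ℕ) : ℝ) ≤ Real.sqrt ρ := by
        rw [show ρ = Real.sqrt ρ ^ 2 from (Real.sq_sqrt hρ.le).symm] at hsq
        nlinarith [Real.sqrt_nonneg ρ]
      have hfl : ((Ns - k : ℕ) : ℝ) ≤ Real.sqrt ρ / γmin := by
        rw [le_div_iff₀ hγ]; linarith
      have hnd : Ns - k ≤ d := Nat.le_floor hfl
      omega
    · right
      have hk1' : 1 ≤ k := le_trans hNs hgt.le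
      have hmono := mono' (k - Ns)
      rw [Nat.add_sub_cancel' hgt.le] at hmono
      have hc0 : (0:ℝ) ≤ γmin' * ((k - Ns : ℕ) : ℝ) :=
        mul_nonneg hγ'.le (Nat.cast_nonneg _)
      have hμle : μ Ns ≤ μ k := by nlinarith
      have habs : lam k - lam Ns ≤ ρ := by
        have hlamle : lam Ns ≤ lam k := by
          rw [hlamsq k hk1', hlamsq Ns hNs]
          nlinarith [hμ0 k, hμ0 Ns]
        rw [abs_of_nonpos (by linarith)] at hkρ
        linarith
      have hsq : (γmin' * ((k - Ns : ℕ) : ℝ)) ^ 2 ≤ ρ := by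
        rw [hlamsq k hk1', hlamsq Ns hNs] at habs
        nlinarith [hμ0 k, hμ0 Ns]
      have hle : γmin' * ((k - Ns : ℕ) : ℝ) ≤ Real.sqrt ρ := by
        rw [show ρ = Real.sqrt ρ ^ 2 from (Real.sq_sqrt hρ.le).symm] at hsq
        nlinarith [Real.sqrt_nonneg ρ]
      have hfl : ((k - Ns : ℕ) : ℝ) ≤ Real.sqrt ρ / γmin' := by
        rw [le_div_iff₀ hγ']; linarith
      have hnd : k - Ns ≤ d' := Nat.le_floor hfl
      omega
  set L : ℕ := Ns - max 1 (Ns - d) with hLdef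
  have hcard : countingFn lam Ns ρ ≤ L + d' := by
    have h1 : countingFn lam Ns ρ ≤ F.card := by
      rw [countingFn]
      calc Set.ncard _ ≤ (F : Set ℕ).ncard := Set.ncard_le_ncard hsub F.finite_toSet
        _ = F.card := Set.ncard_coe_finset F
    have h2 : F.card ≤ L + d' := by
      calc F.card ≤ (Finset.Ico (max 1 (Ns - d)) Ns).card + (Finset.Ioc Ns (Ns + d')).card :=
            Finset.card_union_le _ _
        _ = L + d' := by rw [Nat.card_Ico, Nat.card_Ioc]; omega
    exact h1.trans h2
  have hcardR : (countingFn lam Ns ρ : ℝ) ≤ (L : ℝ) + (d' : ℝ) := by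
    exact_mod_cast hcard
  have hdR : (d : ℝ) ≤ Real.sqrt ρ / γmin :=
    Nat.floor_le (div_nonneg (Real.sqrt_nonneg _) hγ.le)
  have hd'R : (d' : ℝ) ≤ Real.sqrt ρ / γmin' :=
    Nat.floor_le (div_nonneg (Real.sqrt_nonneg _) hγ'.le)
  have hLd : L ≤ d := by omega
  have hLN : L ≤ Ns - 1 := by omega
  have hLdR : (L : ℝ) ≤ Real.sqrt ρ / γmin := le_trans (by exact_mod_cast hLd) hdR
  have hLNR : (L : ℝ) ≤ (Ns : ℝ) - 1 := by
    have h := (Nat.cast_le (α := ℝ)).mpr hLN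
    rw [Nat.cast_sub hNs] at h
    simpa using h
  constructor
  · intro _
    linarith
  · intro _
    have hkey : (L : ℝ) ≤ (1 - γmin / γmin') * ((Ns : ℝ) - 1) + Real.sqrt ρ / γmin' := by
      have ht1 : 0 < γmin / γmin' := div_pos hγ hγ'
      have ht2 : γmin / γmin' ≤ 1 := (div_le_one hγ').mpr hγγ.le
      have heq : γmin / γmin' * (Real.sqrt ρ / γmin) = Real.sqrt ρ / γmin' := by
        field_simp
      nlinarith
    have h2 : 2 * Real.sqrt ρ / γmin' = Real.sqrt ρ / γmin' + Real.sqrt ρ / γmin' := by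
      ring
    linarith
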